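/- arXiv:1605.09039 — 3 statements merged into one kernel-verified Lean document; each statement's English description precedes it below -/
import Mathlib

section
/- For every positive integer m there is a finite constant C_m, depending only on m, with the following property. Let Y_1, ..., Y_k be independent real random variables with E[Y_j] = 0 for each j, and suppose there are nonnegative reals N_1, ..., N_k with |Y_j| ≤ N_j almost surely for each j. Then E[(Y_1 + ... + Y_k)^{2m}] ≤ C_m · (max_{1≤j≤k} N_j)^m · (N_1 + ... + N_k)^m. -/
open MeasureTheory ProbabilityTheory Finset

section Aux
variable {Ω : Type} [MeasurableSpace Ω] {μ : Measure Ω} [IsProbabilityMeasure μ]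

variable {Ω : Type} [MeasurableSpace Ω] {μ : Measure Ω} [IsProbabilityMeasure μ]

lemma aux_integrable_prod_pow {k : ℕ} {Y : Fin k → Ω → ℝ} {N : Fin k → ℝ}
    (hmeas : ∀ j, Measurable (Y j)) (hN : ∀ j, 0 ≤ N j)
    (hbd : ∀ j, ∀ᵐ ω ∂μ, |Y j ω| ≤ N j) (e : Fin k → ℕ) (s : Finset (Fin k)) :
    Integrable (fun ω => ∏ i ∈ s, Y i ω ^ e i) μ := by
  apply Integrable.mono' (integrable_const (∏ i ∈ s, N i ^ e i))
  · exact (Finset.measurable_prod s fun i _ => (hmeas i).pow_const (e i)).aestronglyMeasurable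
  · filter_upwards [ae_all_iff.2 hbd] with ω hω
    calc ‖∏ i ∈ s, Y i ω ^ e i‖ = ∏ i ∈ s, |Y i ω| ^ e i := by
          rw [Real.norm_eq_abs, Finset.abs_prod]; simp [abs_pow]
      _ ≤ ∏ i ∈ s, N i ^ e i := by
          apply Finset.prod_le_prod (fun i _ => by positivity)
            (fun i _ => pow_le_pow_left₀ (abs_nonneg _) (hω i) (e i))

lemma aux_integral_prod_pow {k : ℕ} {Y : Fin k → Ω → ℝ} {N : Fin k → ℝ}
    (hmeas : ∀ j, Measurable (Y j))
    (hindep : iIndepFun Y μ) (hN : ∀ j, 0 ≤ N j)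
    (hbd : ∀ j, ∀ᵐ ω ∂μ, |Y j ω| ≤ N j) (e : Fin k → ℕ) (s : Finset (Fin k)) :
    ∫ ω, ∏ i ∈ s, Y i ω ^ e i ∂μ = ∏ i ∈ s, ∫ ω, Y i ω ^ e i ∂μ := by
  classical
  induction s using Finset.cons_induction with
  | empty => simp
  | cons i s his ih =>
    have hd : Disjoint ({i} : Finset (Fin k)) s := by simpa using his
    have hIF := hindep.indepFun_finset {i} s hd hmeas
    have hcomp : IndepFun (fun ω => Y i ω ^ e i) (fun ω => ∏ j ∈ s, Y j ω ^ e j) μ := by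
      have h1 : Measurable (fun x : ({i} : Finset (Fin k)) → ℝ =>
          x ⟨i, Finset.mem_singleton_self i⟩ ^ e i) :=
        (measurable_pi_apply _).pow_const _
      have h2 : Measurable (fun x : {j // j ∈ s} → ℝ =>
          ∏ j : {j // j ∈ s}, x j ^ e (j : Fin k)) :=
        Finset.measurable_prod _ fun j _ => (measurable_pi_apply _).pow_const _
      have := hIF.comp h1 h2
      convert this using 1
      · rfl
      funext a
      exact (Finset.prod_coe_sort s fun j => Y j a ^ e j).symm
    simp only [Finset.prod_cons]
    rw [← ih]
    exact hcomp.integral_fun_mul_eq_mul_integral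
        ((aux_integrable_prod_pow hmeas hN hbd e {i}).congr (by
          filter_upwards with ω; simp)).aestronglyMeasurable
        (aux_integrable_prod_pow hmeas hN hbd e s).aestronglyMeasurable

lemma aux_esymm_le {k : ℕ} (N : Fin k → ℝ) (hN : ∀ j, 0 ≤ N j) (s : ℕ) :
    ∑ T ∈ Finset.powersetCard s (Finset.univ : Finset (Fin k)), ∏ i ∈ T, N i
      ≤ (∑ i, N i) ^ s := by
  classical
  rw [Finset.sum_pow_eq_sum_piAntidiag]
  have himg : ∀ T ∈ powersetCard s (univ : Finset (Fin k)),
      (fun i => if i ∈ T then 1 else 0) ∈ piAntidiag (univ : Finset (Fin k)) s := by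
    intro T hT
    rw [mem_piAntidiag]
    refine ⟨?_, fun i _ => mem_univ i⟩
    rw [Finset.sum_ite_mem, univ_inter, Finset.sum_const, smul_eq_mul, mul_one]
    exact (Finset.mem_powersetCard.1 hT).2
  calc ∑ T ∈ powersetCard s (univ : Finset (Fin k)), ∏ i ∈ T, N i
      = ∑ T ∈ powersetCard s (univ : Finset (Fin k)),
          ∏ i : Fin k, N i ^ (if i ∈ T then 1 else 0) := by
        refine Finset.sum_congr rfl fun T _ => ?_
        symm
        calc ∏ i : Fin k, N i ^ (if i ∈ T then 1 else 0)
            = ∏ i : Fin k, (if i ∈ T then N i else 1) := by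
              refine Finset.prod_congr rfl fun i _ => by split <;> simp
          _ = ∏ i ∈ univ ∩ T, N i := Finset.prod_ite_mem univ T N
          _ = ∏ i ∈ T, N i := by rw [univ_inter]
    _ = ∑ κ ∈ (powersetCard s (univ : Finset (Fin k))).image
          (fun T => fun i => if i ∈ T then 1 else 0), ∏ i : Fin k, N i ^ κ i := by
        rw [Finset.sum_image]
        intro T _ T' _ h
        ext i
        have h2 := congrFun h i
        by_cases hT1 : i ∈ T <;> by_cases hT2 : i ∈ T' <;> simp [hT1, hT2] at h2 ⊢
    _ ≤ ∑ κ ∈ piAntidiag (univ : Finset (Fin k)) s,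
          (Nat.multinomial univ κ : ℝ) * ∏ i : Fin k, N i ^ κ i := by
        refine le_trans (Finset.sum_le_sum fun κ _ => ?_)
          (Finset.sum_le_sum_of_subset_of_nonneg ?_ ?_)
        · have h1 : (1:ℝ) ≤ (Nat.multinomial univ κ : ℝ) := by
            exact_mod_cast Nat.one_le_iff_ne_zero.2 (Nat.multinomial_pos _ _).ne'
          nlinarith [Finset.prod_nonneg (fun i (_ : i ∈ (univ : Finset (Fin k))) =>
            pow_nonneg (hN i) (κ i))]
        · intro κ hκ
          rcases Finset.mem_image.1 hκ with ⟨T, hT, rfl⟩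
          exact himg T hT
        · intro κ _ _
          exact mul_nonneg (Nat.cast_nonneg _)
            (Finset.prod_nonneg fun i _ => pow_nonneg (hN i) _)

lemma aux_term_bound {k m : ℕ} (N : Fin k → ℝ) (hN : ∀ j, 0 ≤ N j) (Nmax : ℝ)
    (hNmax0 : 0 ≤ Nmax) (hle : ∀ j, N j ≤ Nmax) (hmaxn : Nmax ≤ ∑ i, N i)
    (κ : Fin k → ℕ) (hκsum : ∑ i, κ i = 2*m) (hκ1 : ∀ i, κ i ≠ 1) :
    ∏ i, N i ^ κ i ≤ Nmax ^ m *
      ((∑ i, N i) ^ (m - (Finset.univ.filter (fun i => κ i ≠ 0)).card) *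
        ∏ i ∈ Finset.univ.filter (fun i => κ i ≠ 0), N i) := by
  classical
  set n := ∑ i, N i with hn
  have hn0 : 0 ≤ n := Finset.sum_nonneg fun i _ => hN i
  set S := Finset.univ.filter (fun i : Fin k => κ i ≠ 0) with hS
  set t := S.card with ht
  have hκ2 : ∀ i ∈ S, 2 ≤ κ i := by
    intro i hi
    have h1 := (Finset.mem_filter.1 hi).2
    have h2 := hκ1 i
    omega
  have hsumS : ∑ i ∈ S, κ i = 2*m := by
    rw [← hκsum]
    exact Finset.sum_subset (Finset.filter_subset _ _)
      (fun i _ hni => by simpa [hS] using hni)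
  set E := ∑ i ∈ S, (κ i - 1) with hE
  have hEt : E + t = 2*m := by
    rw [hE, ht, Finset.card_eq_sum_ones, ← Finset.sum_add_distrib, ← hsumS]
    exact Finset.sum_congr rfl fun i hi => by have := hκ2 i hi; omega
  have htE : t ≤ E := by
    rw [hE, ht, Finset.card_eq_sum_ones]
    exact Finset.sum_le_sum fun i hi => by have := hκ2 i hi; omega
  have hmE : m ≤ E := by omega
  have htm : t ≤ m := by omega
  have step1 : ∏ i, N i ^ κ i = ∏ i ∈ S, N i ^ κ i :=
    (Finset.prod_subset (Finset.filter_subset _ _) (fun i _ hni => by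
      have : κ i = 0 := by simpa [hS] using hni
      simp [this])).symm
  have step2 : ∏ i ∈ S, N i ^ κ i ≤ (∏ i ∈ S, N i) * Nmax ^ E := by
    rw [← Finset.prod_pow_eq_pow_sum, ← Finset.prod_mul_distrib]
    refine Finset.prod_le_prod (fun i _ => pow_nonneg (hN i) _) (fun i hi => ?_)
    have h2 := hκ2 i hi
    calc N i ^ κ i = N i * N i ^ (κ i - 1) := by
          rw [← pow_succ']; congr 1; omega
      _ ≤ N i * Nmax ^ (κ i - 1) :=
          mul_le_mul_of_nonneg_left (pow_le_pow_left₀ (hN i) (hle i) _) (hN i)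
  have step3 : Nmax ^ E ≤ Nmax ^ m * n ^ (m - t) := by
    have hEeq : E = m + (m - t) := by omega
    rw [hEeq, pow_add]
    exact mul_le_mul_of_nonneg_left (pow_le_pow_left₀ hNmax0 hmaxn _)
      (pow_nonneg hNmax0 m)
  calc ∏ i, N i ^ κ i = ∏ i ∈ S, N i ^ κ i := step1
    _ ≤ (∏ i ∈ S, N i) * Nmax ^ E := step2
    _ ≤ (∏ i ∈ S, N i) * (Nmax ^ m * n ^ (m - t)) :=
        mul_le_mul_of_nonneg_left step3 (Finset.prod_nonneg fun i _ => hN i)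
    _ = Nmax ^ m * (n ^ (m - t) * ∏ i ∈ S, N i) := by ring

lemma aux_fiber_card {k m : ℕ} (T : Finset (Fin k)) (B : Finset (Fin k → ℕ))
    (hB : ∀ κ ∈ B, (∑ i, κ i = 2*m) ∧ (∀ i, κ i ≠ 0 → i ∈ T) ∧ (∀ i ∈ T, κ i ≠ 0)) :
    B.card ≤ (2*m+1) ^ T.card := by
  classical
  have : ((T.pi (fun _ => Finset.range (2*m+1))).card) = (2*m+1) ^ T.card := by
    rw [Finset.card_pi]
    simp [Finset.prod_const]
  rw [← this]
  apply Finset.card_le_card_of_injOn (fun κ => fun i _ => κ i)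
  · intro κ hκ
    obtain ⟨hsum, _, _⟩ := hB κ hκ
    rw [Finset.mem_coe, Finset.mem_pi]
    intro i hi
    rw [Finset.mem_range, Nat.lt_succ_iff, ← hsum]
    exact Finset.single_le_sum (fun j _ => Nat.zero_le _) (Finset.mem_univ i)
  · intro κ hκ κ' hκ' h
    funext i
    by_cases hi : i ∈ T
    · exact congrFun (congrFun h i) hi
    · have h1 : κ i = 0 := by
        by_contra hne
        exact hi ((hB κ (Finset.mem_coe.1 hκ)).2.1 i hne)
      have h2 : κ' i = 0 := by
        by_contra hne
        exact hi ((hB κ' (Finset.mem_coe.1 hκ')).2.1 i hne)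
      rw [h1, h2]


lemma aux_sum_supp_bound {k m : ℕ} (N : Fin k → ℝ) (hN : ∀ j, 0 ≤ N j)
    [DecidablePred fun κ : Fin k → ℕ => ∀ i, κ i ≠ 1] :
    ∑ κ ∈ (((Finset.univ : Finset (Fin k)).piAntidiag (2*m)).filter (fun κ => ∀ i, κ i ≠ 1)),
      ((∑ i, N i) ^ (m - (Finset.univ.filter (fun i => κ i ≠ 0)).card) *
        ∏ i ∈ Finset.univ.filter (fun i => κ i ≠ 0), N i)
      ≤ (m+1) * (2*m+1)^m * (∑ i, N i)^m := by
  classical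
  set n := ∑ i, N i with hn
  have hn0 : 0 ≤ n := Finset.sum_nonneg fun i _ => hN i
  set A := (((Finset.univ : Finset (Fin k)).piAntidiag (2*m)).filter (fun κ => ∀ i, κ i ≠ 1))
    with hA
  set F : Finset (Fin k) → ℝ := fun T => n ^ (m - T.card) * ∏ i ∈ T, N i with hF
  have hF0 : ∀ T, 0 ≤ F T := fun T =>
    mul_nonneg (pow_nonneg hn0 _) (Finset.prod_nonneg fun i _ => hN i)
  have hfib : ∀ T : Finset (Fin k), ∀ κ ∈ A.filter
      (fun κ => Finset.univ.filter (fun i => κ i ≠ 0) = T), T.card ≤ m := by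
    intro T κ hκ
    simp only [Finset.mem_filter, hA, Finset.mem_piAntidiag] at hκ
    obtain ⟨⟨⟨hsum, _⟩, h1⟩, hsupp⟩ := hκ
    have h2 : ∀ i ∈ T, 2 ≤ κ i := by
      intro i hi
      rw [← hsupp] at hi
      have := (Finset.mem_filter.1 hi).2
      have := h1 i
      omega
    have hsub : ∑ i ∈ T, κ i ≤ 2*m := by
      rw [← hsum]
      exact Finset.sum_le_sum_of_subset_of_nonneg (Finset.subset_univ T)
        (fun _ _ _ => Nat.zero_le _)
    have : 2 * T.card ≤ ∑ i ∈ T, κ i := by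
      calc 2 * T.card = ∑ _i ∈ T, 2 := by rw [Finset.sum_const, smul_eq_mul, mul_comm]
        _ ≤ ∑ i ∈ T, κ i := Finset.sum_le_sum h2
    omega
  calc ∑ κ ∈ A, F (Finset.univ.filter (fun i => κ i ≠ 0))
      = ∑ T ∈ (Finset.univ : Finset (Fin k)).powerset,
          ∑ κ ∈ A.filter (fun κ => Finset.univ.filter (fun i => κ i ≠ 0) = T),
            F (Finset.univ.filter (fun i => κ i ≠ 0)) :=
        (Finset.sum_fiberwise_of_maps_to (fun κ _ => Finset.mem_powerset.2
          (Finset.subset_univ _)) _).symm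
    _ = ∑ T ∈ (Finset.univ : Finset (Fin k)).powerset,
          ((A.filter (fun κ => Finset.univ.filter (fun i => κ i ≠ 0) = T)).card : ℝ) * F T := by
        refine Finset.sum_congr rfl fun T _ => ?_
        rw [Finset.sum_congr rfl (fun κ hκ => by
          rw [(Finset.mem_filter.1 hκ).2]), Finset.sum_const, nsmul_eq_mul]
    _ = ∑ T ∈ ((Finset.univ : Finset (Fin k)).powerset).filter (fun T => T.card ≤ m),
          ((A.filter (fun κ => Finset.univ.filter (fun i => κ i ≠ 0) = T)).card : ℝ) * F T := by
        refine (Finset.sum_subset (Finset.filter_subset _ _) fun T hT hTn => ?_).symm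
        have : (A.filter (fun κ => Finset.univ.filter (fun i => κ i ≠ 0) = T)) = ∅ := by
          rw [Finset.eq_empty_iff_forall_notMem]
          intro κ hκ
          exact hTn (Finset.mem_filter.2 ⟨hT, hfib T κ hκ⟩)
        rw [this]
        simp
    _ ≤ ∑ T ∈ ((Finset.univ : Finset (Fin k)).powerset).filter (fun T => T.card ≤ m),
          ((2*m+1:ℕ) ^ m : ℝ) * F T := by
        refine Finset.sum_le_sum fun T hT => ?_
        have hTm := (Finset.mem_filter.1 hT).2
        refine mul_le_mul_of_nonneg_right ?_ (hF0 T)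
        have h1 : (A.filter (fun κ => Finset.univ.filter (fun i => κ i ≠ 0) = T)).card
            ≤ (2*m+1) ^ T.card := by
          refine aux_fiber_card T _ (fun κ hκ => ?_)
          simp only [Finset.mem_filter, hA, Finset.mem_piAntidiag] at hκ
          obtain ⟨⟨⟨hsum, _⟩, _⟩, hsupp⟩ := hκ
          refine ⟨hsum, fun i hne => ?_, fun i hi => ?_⟩
          · exact hsupp ▸ Finset.mem_filter.2 ⟨Finset.mem_univ i, hne⟩
          · rw [← hsupp] at hi
            exact (Finset.mem_filter.1 hi).2
        have hb : 1 ≤ 2*m+1 := Nat.succ_le_succ (Nat.zero_le _)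
        have h2 : (2*m+1) ^ T.card ≤ (2*m+1) ^ m :=
          Nat.pow_le_pow_right hb hTm
        exact_mod_cast (h1.trans h2)
    _ = ((2*m+1:ℕ) ^ m : ℝ) * ∑ T ∈ ((Finset.univ : Finset (Fin k)).powerset).filter
          (fun T => T.card ≤ m), F T := by rw [Finset.mul_sum]
    _ ≤ ((2*m+1:ℕ) ^ m : ℝ) * ((m+1) * n^m) := by
        refine mul_le_mul_of_nonneg_left ?_ (by positivity)
        calc ∑ T ∈ ((Finset.univ : Finset (Fin k)).powerset).filter (fun T => T.card ≤ m), F T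
            = ∑ s ∈ Finset.range (m+1),
                ∑ T ∈ (((Finset.univ : Finset (Fin k)).powerset).filter
                  (fun T => T.card ≤ m)).filter (fun T => T.card = s), F T :=
              (Finset.sum_fiberwise_of_maps_to (fun T hT => Finset.mem_range.2
                (Nat.lt_succ_of_le (Finset.mem_filter.1 hT).2)) _).symm
          _ ≤ ∑ s ∈ Finset.range (m+1), n^m := by
              refine Finset.sum_le_sum fun s hs => ?_
              have hsm : s ≤ m := Nat.lt_succ_iff.1 (Finset.mem_range.1 hs)
              calc ∑ T ∈ (((Finset.univ : Finset (Fin k)).powerset).filter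
                    (fun T => T.card ≤ m)).filter (fun T => T.card = s), F T
                  = ∑ T ∈ (((Finset.univ : Finset (Fin k)).powerset).filter
                    (fun T => T.card ≤ m)).filter (fun T => T.card = s),
                      n ^ (m - s) * ∏ i ∈ T, N i := by
                    refine Finset.sum_congr rfl fun T hT => ?_
                    simp only [hF, (Finset.mem_filter.1 hT).2]
                _ ≤ ∑ T ∈ Finset.powersetCard s (Finset.univ : Finset (Fin k)),
                      n ^ (m - s) * ∏ i ∈ T, N i := by
                    refine Finset.sum_le_sum_of_subset_of_nonneg ?_
                      (fun T _ _ => mul_nonneg (pow_nonneg hn0 _)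
                        (Finset.prod_nonneg fun i _ => hN i))
                    intro T hT
                    rw [Finset.mem_powersetCard]
                    exact ⟨Finset.subset_univ T, (Finset.mem_filter.1 hT).2⟩
                _ = n ^ (m - s) * ∑ T ∈ Finset.powersetCard s
                      (Finset.univ : Finset (Fin k)), ∏ i ∈ T, N i := by
                    rw [Finset.mul_sum]
                _ ≤ n ^ (m - s) * n ^ s :=
                    mul_le_mul_of_nonneg_left (aux_esymm_le N hN s)
                      (pow_nonneg hn0 _)
                _ = n ^ m := by rw [← pow_add]; congr 1; omega
          _ = (m+1) * n^m := by
              rw [Finset.sum_const, Finset.card_range, nsmul_eq_mul]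
              push_cast; ring
    _ ≤ (m+1) * (2*m+1)^m * n^m := by
        push_cast; ring_nf; rfl
end Aux

/-- For every `m ≥ 1` there is a constant `C_m` such that for any independent
centered random variables `Y₁, …, Y_k` with `|Y_j| ≤ N_j` a.s.,
`E[(Y₁ + ⋯ + Y_k)^{2m}] ≤ C_m (max_j N_j)^m (N₁ + ⋯ + N_k)^m`. -/
theorem moment_bound_indep_bounded
    (m : ℕ) (hm : 0 < m) :
    ∃ C : ℝ, ∀ (Ω : Type) (_ : MeasurableSpace Ω) (μ : Measure Ω),
      IsProbabilityMeasure μ →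
      ∀ (k : ℕ) (hk : 0 < k) (Y : Fin k → Ω → ℝ) (N : Fin k → ℝ),
        (∀ j, Measurable (Y j)) →
        iIndepFun Y μ →
        (∀ j, ∫ ω, Y j ω ∂μ = 0) →
        (∀ j, 0 ≤ N j) →
        (∀ j, ∀ᵐ ω ∂μ, |Y j ω| ≤ N j) →
        ∫ ω, (∑ j, Y j ω) ^ (2 * m) ∂μ ≤
          C * (Finset.univ.sup' (Finset.univ_nonempty_iff.mpr ⟨⟨0, hk⟩⟩) N) ^ m *
            (∑ j, N j) ^ m := by
  classical
  refine ⟨((2*m).factorial : ℝ) * ((m+1) * (2*m+1)^m), ?_⟩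
  intro Ω _ μ hμ k hk Y N hmeas hindep hmean hN hbd
  set n := ∑ j, N j with hn
  set Nmax := Finset.univ.sup' (Finset.univ_nonempty_iff.mpr ⟨⟨0, hk⟩⟩) N with hNmax
  have hle : ∀ j, N j ≤ Nmax := fun j => Finset.le_sup' N (Finset.mem_univ j)
  have hNmax0 : 0 ≤ Nmax := le_trans (hN ⟨0, hk⟩) (hle ⟨0, hk⟩)
  have hmaxn : Nmax ≤ n := by
    obtain ⟨j0, -, hj0⟩ := Finset.exists_mem_eq_sup'
      (Finset.univ_nonempty_iff.mpr ⟨(⟨0, hk⟩ : Fin k)⟩) N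
    rw [hNmax, hj0]
    exact Finset.single_le_sum (fun i _ => hN i) (Finset.mem_univ j0)
  have hn0 : 0 ≤ n := Finset.sum_nonneg fun i _ => hN i
  -- expansion via multinomial theorem and independence
  have hexp : ∫ ω, (∑ j, Y j ω) ^ (2*m) ∂μ
      = ∑ κ ∈ Finset.piAntidiag (Finset.univ : Finset (Fin k)) (2*m),
          (Nat.multinomial Finset.univ κ : ℝ) * ∏ i, ∫ ω, Y i ω ^ κ i ∂μ := by
    calc ∫ ω, (∑ j, Y j ω) ^ (2*m) ∂μ
        = ∫ ω, ∑ κ ∈ Finset.piAntidiag (Finset.univ : Finset (Fin k)) (2*m),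
            (Nat.multinomial Finset.univ κ : ℝ) * ∏ i, Y i ω ^ κ i ∂μ := by
          refine integral_congr_ae (Filter.Eventually.of_forall fun ω => ?_)
          exact Finset.sum_pow_eq_sum_piAntidiag Finset.univ (fun j => Y j ω) (2*m)
      _ = ∑ κ ∈ Finset.piAntidiag (Finset.univ : Finset (Fin k)) (2*m),
            ∫ ω, (Nat.multinomial Finset.univ κ : ℝ) * ∏ i, Y i ω ^ κ i ∂μ :=
          integral_finset_sum _ (fun κ _ =>
            (aux_integrable_prod_pow hmeas hN hbd κ Finset.univ).const_mul _)
      _ = ∑ κ ∈ Finset.piAntidiag (Finset.univ : Finset (Fin k)) (2*m),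
            (Nat.multinomial Finset.univ κ : ℝ) * ∫ ω, ∏ i, Y i ω ^ κ i ∂μ := by
          refine Finset.sum_congr rfl fun κ _ => ?_
          exact integral_const_mul _ _
      _ = _ := by
          refine Finset.sum_congr rfl fun κ _ => ?_
          rw [aux_integral_prod_pow hmeas hindep hN hbd κ Finset.univ]
  -- terms with some exponent equal to 1 vanish
  set A := (Finset.piAntidiag (Finset.univ : Finset (Fin k)) (2*m)).filter
    (fun κ => ∀ i, κ i ≠ 1) with hA
  have hAsub : A ⊆ Finset.piAntidiag (Finset.univ : Finset (Fin k)) (2*m) :=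
    Finset.filter_subset _ _
  have hzero : ∀ κ ∈ Finset.piAntidiag (Finset.univ : Finset (Fin k)) (2*m), κ ∉ A →
      (Nat.multinomial Finset.univ κ : ℝ) * ∏ i, ∫ ω, Y i ω ^ κ i ∂μ = 0 := by
    intro κ hκ hκA
    have h1 : ∃ i, κ i = 1 := by
      by_contra hc
      push_neg at hc
      exact hκA (Finset.mem_filter.2 ⟨hκ, hc⟩)
    obtain ⟨i, hi⟩ := h1
    have h2 : ∫ ω, Y i ω ^ κ i ∂μ = 0 := by
      rw [hi]
      simpa using hmean i
    rw [Finset.prod_eq_zero (Finset.mem_univ i) h2, mul_zero]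
  rw [hexp, ← Finset.sum_subset hAsub hzero]
  -- per-term bound: |∫ Y^κ| ≤ N^κ and multinomial ≤ (2m)!
  have hbound : ∀ κ ∈ A, (Nat.multinomial Finset.univ κ : ℝ) * ∏ i, ∫ ω, Y i ω ^ κ i ∂μ
      ≤ ((2*m).factorial : ℝ) * ∏ i, N i ^ κ i := by
    intro κ hκ
    have hκsum : ∑ i, κ i = 2*m :=
      (Finset.mem_piAntidiag.1 (hAsub hκ)).1
    have hmult : (Nat.multinomial Finset.univ κ : ℝ) ≤ ((2*m).factorial : ℝ) := by
      have h1 := Nat.multinomial_spec (Finset.univ : Finset (Fin k)) κ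
      rw [hκsum] at h1
      have h2 : Nat.multinomial Finset.univ κ ≤ (2*m).factorial := by
        rw [← h1]
        exact Nat.le_mul_of_pos_left _ (Finset.prod_pos fun i _ => Nat.factorial_pos _)
      exact_mod_cast h2
    have hprod : ∏ i, ∫ ω, Y i ω ^ κ i ∂μ ≤ ∏ i, N i ^ κ i := by
      refine le_trans (le_abs_self _) ?_
      rw [Finset.abs_prod]
      refine Finset.prod_le_prod (fun i _ => abs_nonneg _) (fun i _ => ?_)
      -- |∫ Y i ^ κ i| ≤ N i ^ κ i
      have hint : Integrable (fun ω => Y i ω ^ κ i) μ := by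
        have := aux_integrable_prod_pow hmeas hN hbd κ ({i} : Finset (Fin k))
        refine this.congr ?_
        filter_upwards with ω
        simp
      calc |∫ ω, Y i ω ^ κ i ∂μ| ≤ ∫ ω, |Y i ω ^ κ i| ∂μ := by
            simpa [Real.norm_eq_abs] using
              norm_integral_le_integral_norm (μ := μ) (fun ω => Y i ω ^ κ i)
        _ ≤ ∫ _ω, N i ^ κ i ∂μ := by
            refine integral_mono_ae hint.abs (integrable_const _) ?_
            filter_upwards [hbd i] with ω hω
            rw [abs_pow]
            exact pow_le_pow_left₀ (abs_nonneg _) hω _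
        _ = N i ^ κ i := by simp
    have hprodN : (0:ℝ) ≤ ∏ i, N i ^ κ i :=
      Finset.prod_nonneg fun i _ => pow_nonneg (hN i) _
    calc (Nat.multinomial Finset.univ κ : ℝ) * ∏ i, ∫ ω, Y i ω ^ κ i ∂μ
        ≤ (Nat.multinomial Finset.univ κ : ℝ) * ∏ i, N i ^ κ i :=
          mul_le_mul_of_nonneg_left hprod (Nat.cast_nonneg _)
      _ ≤ ((2*m).factorial : ℝ) * ∏ i, N i ^ κ i :=
          mul_le_mul_of_nonneg_right hmult hprodN
  calc ∑ κ ∈ A, (Nat.multinomial Finset.univ κ : ℝ) * ∏ i, ∫ ω, Y i ω ^ κ i ∂μ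
      ≤ ∑ κ ∈ A, ((2*m).factorial : ℝ) * ∏ i, N i ^ κ i := Finset.sum_le_sum hbound
    _ = ((2*m).factorial : ℝ) * ∑ κ ∈ A, ∏ i, N i ^ κ i := by rw [← Finset.mul_sum]
    _ ≤ ((2*m).factorial : ℝ) * ∑ κ ∈ A, (Nmax ^ m *
          (n ^ (m - (Finset.univ.filter (fun i => κ i ≠ 0)).card) *
            ∏ i ∈ Finset.univ.filter (fun i => κ i ≠ 0), N i)) := by
        refine mul_le_mul_of_nonneg_left (Finset.sum_le_sum fun κ hκ => ?_)
          (Nat.cast_nonneg _)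
        have hκsum : ∑ i, κ i = 2*m := (Finset.mem_piAntidiag.1 (hAsub hκ)).1
        have hκ1 : ∀ i, κ i ≠ 1 := (Finset.mem_filter.1 hκ).2
        exact aux_term_bound N hN Nmax hNmax0 hle hmaxn κ hκsum hκ1
    _ = ((2*m).factorial : ℝ) * Nmax ^ m * ∑ κ ∈ A,
          (n ^ (m - (Finset.univ.filter (fun i => κ i ≠ 0)).card) *
            ∏ i ∈ Finset.univ.filter (fun i => κ i ≠ 0), N i) := by
        rw [← Finset.mul_sum, ← mul_assoc]
    _ ≤ ((2*m).factorial : ℝ) * Nmax ^ m * ((m+1) * (2*m+1)^m * n^m) := by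
        refine mul_le_mul_of_nonneg_left ?_
          (mul_nonneg (Nat.cast_nonneg _) (pow_nonneg hNmax0 m))
        exact aux_sum_supp_bound N hN
    _ = ((2*m).factorial : ℝ) * ((m+1) * (2*m+1)^m) * Nmax ^ m * n ^ m := by ring
end

section
/- For every positive integer m there is a finite constant C_m, depending only on m, with the following property. Let I be a finite nonempty set, let R ⊆ I × I be a symmetric relation with (i,i) ∈ R for all i ∈ I, and let L = max_{i∈I} |{j ∈ I : (i,j) ∈ R}|. Let (Y_i)_{i∈I} be real random variables with |Y_i| ≤ 1 almost surely and E[Y_i] = 0 for each i, and suppose that for each i ∈ I, the random variable Y_i is independent of the family (Y_j : j ∈ I, (i,j) ∉ R). Then E[(Σ_{i∈I} Y_i)^{2m}] ≤ C_m · (|I| · L)^m. -/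
open MeasureTheory ProbabilityTheory

section Aux
open Finset

lemma count_fix {β ι : Type} [Fintype β] [DecidableEq β] [Fintype ι] [DecidableEq ι]
    (R : ι → ι → Prop) [DecidableRel R] (L : ℕ)
    (hL : ∀ i, (univ.filter (fun j => R i j)).card ≤ L)
    (σ : β → β) (ρ : β → ℕ) (hv : β → ι) :
    ∀ (n : ℕ) (P F : Finset β), P.card = n → Disjoint P F →
      (∀ p ∈ P, ρ (σ p) < ρ p) →
      (univ.filter (fun g : β → ι =>
          (∀ p ∈ P, R (g (σ p)) (g p)) ∧ ∀ q ∈ F, g q = hv q)).card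
        ≤ Fintype.card ι ^ (Fintype.card β - P.card - F.card) * L ^ P.card := by
  intro n
  induction n with
  | zero =>
    intro P F hPn hdisj hrank
    have hP : P = ∅ := card_eq_zero.mp hPn
    subst hP
    simp only [card_empty, pow_zero, mul_one, Nat.sub_zero]
    have h1 : (univ.filter (fun g : β → ι =>
        (∀ p ∈ (∅ : Finset β), R (g (σ p)) (g p)) ∧ ∀ q ∈ F, g q = hv q)).card
        ≤ Fintype.card ((↥(Fᶜ)) → ι) := by
      rw [← Finset.card_univ]
      apply Finset.card_le_card_of_injOn (fun g (x : ↥(Fᶜ)) => g x.1)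
      · intro g _; exact Finset.mem_univ _
      · intro g₁ h₁ g₂ h₂ heq
        simp only [Finset.mem_coe, Finset.mem_filter] at h₁ h₂
        funext x
        by_cases hx : x ∈ F
        · rw [h₁.2.2 x hx, h₂.2.2 x hx]
        · exact congrFun heq ⟨x, by simpa using hx⟩
    calc _ ≤ Fintype.card ((↥(Fᶜ)) → ι) := h1
      _ = Fintype.card ι ^ (Fintype.card β - F.card) := by
          rw [Fintype.card_fun, Fintype.card_coe, Finset.card_compl]
  | succ n ih =>
    intro P F hPn hdisj hrank
    have hPne : P.Nonempty := Finset.card_pos.mp (by omega)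
    obtain ⟨p0, hp0P, hp0max⟩ := Finset.exists_max_image P ρ hPne
    have hσp0 : σ p0 ≠ p0 := fun h => absurd (hrank p0 hp0P) (by rw [h]; omega)
    have hp0F : p0 ∉ F := Finset.disjoint_left.mp hdisj hp0P
    have hcards : P.card + F.card ≤ Fintype.card β := by
      have h2 : (P ∪ F).card = P.card + F.card := Finset.card_union_of_disjoint hdisj
      have h3 : (P ∪ F).card ≤ Fintype.card β := by
        rw [← Finset.card_univ]; exact Finset.card_le_card (Finset.subset_univ _)
      omega
    have he : ∀ a b c : ℕ, a - b - (c+1) = a - (b+1) - c := by intro a b c; omega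
    set s := univ.filter (fun g : β → ι =>
        (∀ p ∈ P, R (g (σ p)) (g p)) ∧ ∀ q ∈ F, g q = hv q) with hs
    set P' := P.erase p0 with hP'
    set F' := insert p0 F with hF'
    set t := univ.filter (fun g : β → ι =>
        (∀ p ∈ P', R (g (σ p)) (g p)) ∧ ∀ q ∈ F', g q = hv q) with ht
    have hmaps : ∀ g ∈ s, Function.update g p0 (hv p0) ∈ t := by
      intro g hg
      rw [hs, Finset.mem_filter] at hg
      rw [ht, Finset.mem_filter]
      refine ⟨Finset.mem_univ _, ?_, ?_⟩
      · intro p hp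
        have hpP : p ∈ P := Finset.mem_of_mem_erase hp
        have hpne : p ≠ p0 := Finset.ne_of_mem_erase hp
        have hσpne : σ p ≠ p0 := by
          intro h
          have h1 := hrank p hpP
          have h2 := hp0max p hpP
          rw [h] at h1; omega
        rw [Function.update_of_ne hσpne, Function.update_of_ne hpne]
        exact hg.2.1 p hpP
      · intro q hq
        rcases Finset.mem_insert.mp hq with h | h
        · subst h; rw [Function.update_self]
        · rw [Function.update_of_ne (by rintro rfl; exact hp0F h)]
          exact hg.2.2 q h
    have hfib : ∀ a ∈ t, (s.filter (fun g => Function.update g p0 (hv p0) = a)).card ≤ L := by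
      intro a _
      have : (s.filter (fun g => Function.update g p0 (hv p0) = a)).card
          ≤ (univ.filter (fun j => R (a (σ p0)) j)).card := by
        apply Finset.card_le_card_of_injOn (fun g => g p0)
        · intro g hg
          rw [Finset.mem_coe, Finset.mem_filter] at hg
          obtain ⟨hgs, hga⟩ := hg
          rw [hs, Finset.mem_filter] at hgs
          have hR := hgs.2.1 p0 hp0P
          have : a (σ p0) = g (σ p0) := by
            rw [← hga, Function.update_of_ne hσp0]
          rw [Finset.mem_coe, Finset.mem_filter]
          exact ⟨Finset.mem_univ _, this ▸ hR⟩
        · intro g₁ h₁ g₂ h₂ heq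
          simp only [Finset.mem_coe, Finset.mem_filter] at h₁ h₂
          funext x
          by_cases hx : x = p0
          · subst hx; exact heq
          · have := h₁.2.trans h₂.2.symm
            have := congrFun this x
            rwa [Function.update_of_ne hx, Function.update_of_ne hx] at this
      exact this.trans (hL _)
    have hst : s.card ≤ L * t.card :=
      Finset.card_le_mul_card_image_of_maps_to hmaps L hfib
    have hP'card : P'.card = n := by
      rw [hP', Finset.card_erase_of_mem hp0P, hPn, Nat.succ_sub_one]
    have hdisj' : Disjoint P' F' := by
      rw [Finset.disjoint_left]
      intro x hx hxF'
      rcases Finset.mem_insert.mp hxF' with h | h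
      · exact Finset.ne_of_mem_erase hx h
      · exact Finset.disjoint_left.mp hdisj (Finset.mem_of_mem_erase hx) h
    have hrank' : ∀ p ∈ P', ρ (σ p) < ρ p := fun p hp => hrank p (Finset.mem_of_mem_erase hp)
    have hIH := ih P' F' hP'card hdisj' hrank'
    have hF'card : F'.card = F.card + 1 := Finset.card_insert_of_notMem hp0F
    calc s.card ≤ L * t.card := hst
      _ ≤ L * (Fintype.card ι ^ (Fintype.card β - P'.card - F'.card) * L ^ P'.card) :=
          Nat.mul_le_mul_left L hIH
      _ = Fintype.card ι ^ (Fintype.card β - P.card - F.card) * L ^ P.card := by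
          rw [hP'card, hF'card, hPn, he]
          ring


lemma matching_exists {β : Type} [DecidableEq β] [Fintype β] (A : β → β → Prop)
    (hsymm : ∀ p q, A p q → A q p) (T : Finset β) :
    ∃ (S V : Finset β) (σ : β → β),
      S ⊆ V ∧ V ⊆ T ∧ V.card = 2 * S.card ∧
      (∀ p ∈ V, p ∉ S → A p (σ p) ∧ σ p ∈ S) ∧
      (∀ p ∈ T, ∀ q ∈ T, p ≠ q → A p q → p ∈ V ∨ q ∈ V) := by
  classical
  induction T using Finset.strongInduction with
  | _ T ih =>
    by_cases hex : ∃ p ∈ T, ∃ q ∈ T, p ≠ q ∧ A p q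
    · obtain ⟨p, hp, q, hq, hpq, hA⟩ := hex
      have hqT' : q ∈ T.erase p := Finset.mem_erase.mpr ⟨fun h => hpq h.symm, hq⟩
      have hss : (T.erase p).erase q ⊂ T :=
        lt_of_le_of_lt (Finset.erase_subset _ _) (Finset.erase_ssubset hp)
      obtain ⟨S', V', σ', hSV', hVT', hcard', hσ', hmax'⟩ := ih _ hss
      have hpT' : p ∉ (T.erase p).erase q := fun h =>
        (Finset.mem_erase.mp (Finset.mem_of_mem_erase h)).1 rfl
      have hqT'' : q ∉ (T.erase p).erase q := fun h => (Finset.mem_erase.mp h).1 rfl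
      have hpV' : p ∉ V' := fun h => hpT' (hVT' h)
      have hqV' : q ∉ V' := fun h => hqT'' (hVT' h)
      have hpS' : p ∉ S' := fun h => hpV' (hSV' h)
      refine ⟨insert p S', insert p (insert q V'), Function.update σ' q p, ?_, ?_, ?_, ?_, ?_⟩
      · exact Finset.insert_subset_insert _ (hSV'.trans (Finset.subset_insert _ _))
      · apply Finset.insert_subset hp
        apply Finset.insert_subset hq
        exact hVT'.trans ((Finset.erase_subset _ _).trans (Finset.erase_subset _ _))
      · rw [Finset.card_insert_of_notMem (by simp [hpq, hpV']),
          Finset.card_insert_of_notMem hqV', Finset.card_insert_of_notMem hpS', hcard']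
        ring
      · intro x hxV hxS
        have hxp : x ≠ p := fun h => hxS (h ▸ Finset.mem_insert_self _ _)
        rcases Finset.mem_insert.mp hxV with h | h
        · exact absurd h hxp
        rcases Finset.mem_insert.mp h with h | h
        · subst h
          rw [Function.update_self]
          exact ⟨hsymm _ _ hA, Finset.mem_insert_self _ _⟩
        · have hxq : x ≠ q := fun he => hqV' (he ▸ h)
          rw [Function.update_of_ne hxq]
          have hxS' : x ∉ S' := fun hs => hxS (Finset.mem_insert_of_mem hs)
          obtain ⟨h1, h2⟩ := hσ' x h hxS'
          exact ⟨h1, Finset.mem_insert_of_mem h2⟩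
      · intro u hu v hv huv hAuv
        by_cases hup : u = p ∨ u = q
        · left
          rcases hup with h | h
          · exact h ▸ Finset.mem_insert_self _ _
          · exact h ▸ Finset.mem_insert_of_mem (Finset.mem_insert_self _ _)
        by_cases hvp : v = p ∨ v = q
        · right
          rcases hvp with h | h
          · exact h ▸ Finset.mem_insert_self _ _
          · exact h ▸ Finset.mem_insert_of_mem (Finset.mem_insert_self _ _)
        push_neg at hup hvp
        have hu' : u ∈ (T.erase p).erase q :=
          Finset.mem_erase.mpr ⟨hup.2, Finset.mem_erase.mpr ⟨hup.1, hu⟩⟩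
        have hv' : v ∈ (T.erase p).erase q :=
          Finset.mem_erase.mpr ⟨hvp.2, Finset.mem_erase.mpr ⟨hvp.1, hv⟩⟩
        rcases hmax' u hu' v hv' huv hAuv with h | h
        · exact Or.inl (Finset.mem_insert_of_mem (Finset.mem_insert_of_mem h))
        · exact Or.inr (Finset.mem_insert_of_mem (Finset.mem_insert_of_mem h))
    · refine ⟨∅, ∅, id, le_rfl, Finset.empty_subset _, by simp, by simp, ?_⟩
      intro p hp q hq hpq hA
      exact absurd ⟨p, hp, q, hq, hpq, hA⟩ hex

lemma pow_key (N L m c : ℕ) (hLN : L ≤ N) (hm : m ≤ c) (hc2m : c ≤ 2 * m) :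
    N ^ (2 * m - c - 0) * L ^ c ≤ (N * L) ^ m := by
  set d := c - m with hd
  have h2 : 2 * m - c - 0 = m - d := by omega
  have h3 : c = (m - d) + 2 * d := by omega
  have h4 : m - d + d = m := by omega
  rw [h2, h3]
  calc N ^ (m - d) * L ^ (m - d + 2 * d) = (N * L) ^ (m - d) * (L ^ 2) ^ d := by
        rw [pow_add, ← mul_assoc, ← mul_pow, pow_mul]
    _ ≤ (N * L) ^ (m - d) * (N * L) ^ d := by
        apply Nat.mul_le_mul_left
        apply Nat.pow_le_pow_left
        calc L ^ 2 = L * L := sq L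
          _ ≤ N * L := Nat.mul_le_mul hLN le_rfl
    _ = (N * L) ^ m := by rw [← pow_add, h4]

lemma good_count {β ι : Type} [Fintype β] [DecidableEq β] [Fintype ι] [DecidableEq ι]
    [Nonempty ι] (R : ι → ι → Prop) [DecidableRel R] (L m : ℕ)
    (hcard : Fintype.card β = 2 * m)
    (hL : ∀ i, (univ.filter (fun j => R i j)).card ≤ L)
    (hLN : L ≤ Fintype.card ι) (hsymm : ∀ i j, R i j → R j i) :
    (univ.filter (fun k : β → ι => ∀ p, ∃ q, q ≠ p ∧ R (k p) (k q))).card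
      ≤ (2*m)^(2*m) * 3^(2*m) * (Fintype.card ι * L) ^ m := by
  classical
  set N := Fintype.card ι with hN
  set PP : ((β → β) × (β → Fin 3)) → Finset β :=
    fun sr => univ.filter (fun p => ((sr.2 (sr.1 p) : ℕ) < (sr.2 p : ℕ))) with hPP
  set D : Finset ((β → β) × (β → Fin 3)) :=
    univ.filter (fun sr => m ≤ (PP sr).card) with hD
  set Eset : ((β → β) × (β → Fin 3)) → Finset (β → ι) :=
    fun sr => univ.filter (fun k => ∀ p ∈ PP sr, R (k (sr.1 p)) (k p)) with hE
  have hsub : univ.filter (fun k : β → ι => ∀ p, ∃ q, q ≠ p ∧ R (k p) (k q))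
      ⊆ D.biUnion Eset := by
    intro k hk
    rw [Finset.mem_filter] at hk
    replace hk := hk.2
    obtain ⟨S, V, σ₀, hSV, hVT, hcardV, hσ₀, hmax⟩ :=
      matching_exists (fun p q => R (k p) (k q)) (fun p q h => hsymm _ _ h) univ
    have hchoice : ∀ p, p ∉ V → ∃ q, q ∈ V ∧ R (k p) (k q) := by
      intro p hpV
      obtain ⟨q, hqp, hR⟩ := hk p
      rcases hmax p (mem_univ _) q (mem_univ _) (Ne.symm hqp) hR with h | h
      · exact absurd h hpV
      · exact ⟨q, h, hR⟩
    set σ : β → β := fun p => if hp : p ∈ V then σ₀ p else (hchoice p hp).choose with hσ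
    set ρ : β → Fin 3 := fun p => if p ∈ S then 0 else if p ∈ V then 1 else 2 with hρ
    have hρval : ∀ p, (ρ p : ℕ) = if p ∈ S then 0 else if p ∈ V then 1 else 2 := by
      intro p
      rw [hρ]
      by_cases h1 : p ∈ S <;> by_cases h2 : p ∈ V <;> simp [h1, h2]
    have hPeq : PP (σ, ρ) = Sᶜ := by
      ext p
      simp only [hPP, Finset.mem_filter, Finset.mem_univ, true_and, Finset.mem_compl]
      constructor
      · intro hlt hpS
        rw [hρval p, if_pos hpS] at hlt
        omega
      · intro hpS
        rw [hρval p, if_neg hpS]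
        by_cases hpV : p ∈ V
        · have hspec := hσ₀ p hpV hpS
          have : σ p = σ₀ p := dif_pos hpV
          rw [if_pos hpV, this, hρval (σ₀ p), if_pos hspec.2]
          omega
        · have : σ p = (hchoice p hpV).choose := dif_neg hpV
          have hspec := (hchoice p hpV).choose_spec
          rw [if_neg hpV, this, hρval _]
          by_cases h1 : (hchoice p hpV).choose ∈ S
          · rw [if_pos h1]; omega
          · rw [if_neg h1, if_pos hspec.1]; omega
    have hPcard : m ≤ (PP (σ, ρ)).card := by
      rw [hPeq, Finset.card_compl]
      have h1 : V.card ≤ Fintype.card β := by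
        rw [← Finset.card_univ]; exact Finset.card_le_card (Finset.subset_univ _)
      omega
    apply Finset.mem_biUnion.mpr
    refine ⟨(σ, ρ), ?_, ?_⟩
    · rw [hD, Finset.mem_filter]; exact ⟨Finset.mem_univ _, hPcard⟩
    · rw [hE, Finset.mem_filter]
      refine ⟨Finset.mem_univ _, ?_⟩
      intro p hp
      rw [hPeq, Finset.mem_compl] at hp
      show R (k (σ p)) (k p)
      by_cases hpV : p ∈ V
      · have hspec := hσ₀ p hpV hp
        have hσp : σ p = σ₀ p := dif_pos hpV
        rw [hσp]
        exact hsymm _ _ hspec.1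
      · have hσp : σ p = (hchoice p hpV).choose := dif_neg hpV
        have hspec := (hchoice p hpV).choose_spec
        rw [hσp]
        exact hsymm _ _ hspec.2
  have hcount : ∀ sr ∈ D, (Eset sr).card ≤ (N * L) ^ m := by
    intro sr hsr
    rw [hD, Finset.mem_filter] at hsr
    have hm : m ≤ (PP sr).card := hsr.2
    have hc2m : (PP sr).card ≤ 2 * m := by
      rw [← hcard, ← Finset.card_univ]; exact Finset.card_le_card (Finset.subset_univ _)
    set c := (PP sr).card with hc
    have hv : β → ι := fun _ => Classical.arbitrary ι
    have hsub2 : Eset sr ⊆ univ.filter (fun g : β → ι =>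
        (∀ p ∈ PP sr, R (g (sr.1 p)) (g p)) ∧ ∀ q ∈ (∅ : Finset β), g q = hv q) := by
      intro g hg
      rw [hE, Finset.mem_filter] at hg
      rw [Finset.mem_filter]
      exact ⟨Finset.mem_univ _, hg.2, by simp⟩
    have hrank : ∀ p ∈ PP sr, (fun p => (sr.2 p : ℕ)) (sr.1 p) < (fun p => (sr.2 p : ℕ)) p := by
      intro p hp
      rw [hPP, Finset.mem_filter] at hp
      exact hp.2
    have hcf := count_fix R L hL sr.1 (fun p => (sr.2 p : ℕ)) hv c (PP sr) ∅ rfl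
      (Finset.disjoint_empty_right _) hrank
    rw [Finset.card_empty, hcard] at hcf
    have h1 : (Eset sr).card ≤ N ^ (2 * m - c - 0) * L ^ c :=
      (Finset.card_le_card hsub2).trans hcf
    exact h1.trans (pow_key N L m c hLN hm hc2m)
  calc (univ.filter (fun k : β → ι => ∀ p, ∃ q, q ≠ p ∧ R (k p) (k q))).card
      ≤ (D.biUnion Eset).card := Finset.card_le_card hsub
    _ ≤ ∑ sr ∈ D, (Eset sr).card := Finset.card_biUnion_le
    _ ≤ D.card * (N * L) ^ m := by
        rw [← smul_eq_mul]
        exact Finset.sum_le_card_nsmul D _ _ hcount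
    _ ≤ (2*m)^(2*m) * 3^(2*m) * (N * L) ^ m := by
        apply Nat.mul_le_mul_right
        calc D.card ≤ Fintype.card ((β → β) × (β → Fin 3)) := by
              rw [← Finset.card_univ]; exact Finset.card_le_card (Finset.subset_univ _)
          _ = (2*m)^(2*m) * 3^(2*m) := by
              rw [Fintype.card_prod, Fintype.card_fun, Fintype.card_fun, hcard, Fintype.card_fin]

end Aux

/-- For every `m ≥ 1` there is a constant `C_m` such that if `(Y_i)_{i ∈ I}`
are centered random variables bounded by `1`, and each `Y_i` is independent of the family of
all `Y_j` with `(i,j)` not in the symmetric reflexive dependency relation `R`, and each index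
is related to at most `L` indices, then `E[(Σ_i Y_i)^{2m}] ≤ C_m (|I| L)^m`. -/
theorem moment_bound_dependency_graph
    (m : ℕ) (hm : 0 < m) :
    ∃ C : ℝ, ∀ (Ω : Type) (_ : MeasurableSpace Ω) (μ : Measure Ω),
      IsProbabilityMeasure μ →
      ∀ (I : Type) (_ : Fintype I) (_ : Nonempty I)
        (R : I → I → Prop) (_ : DecidableRel R) (L : ℕ),
        (∀ i, R i i) →
        (∀ i j, R i j → R j i) →
        L = Finset.univ.sup (fun i => (Finset.univ.filter (fun j => R i j)).card) →
        ∀ (Y : I → Ω → ℝ),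
          (∀ i, Measurable (Y i)) →
          (∀ i, ∀ᵐ ω ∂μ, |Y i ω| ≤ 1) →
          (∀ i, ∫ ω, Y i ω ∂μ = 0) →
          (∀ i, IndepFun (Y i) (fun ω => fun j : {j : I // ¬ R i j} => Y j.1 ω) μ) →
          ∫ ω, (∑ i, Y i ω) ^ (2 * m) ∂μ ≤ C * ((Fintype.card I : ℝ) * L) ^ m := by
  refine ⟨(((2*m)^(2*m) * 3^(2*m) : ℕ) : ℝ), ?_⟩
  intro Ω mΩ μ hμ I hI hne R hRdec L hrefl hsymm hLdef Y hmeas hbound hcent hindep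
  classical
  have hL : ∀ i, (Finset.univ.filter (fun j => R i j)).card ≤ L := fun i =>
    hLdef ▸ Finset.le_sup (f := fun i => (Finset.univ.filter (fun j => R i j)).card) (Finset.mem_univ i)
  have hLN : L ≤ Fintype.card I := by
    rw [hLdef]
    apply Finset.sup_le
    intro i _
    rw [← Finset.card_univ]
    exact Finset.card_le_card (Finset.subset_univ _)
  have haeb : ∀ᵐ ω ∂μ, ∀ i, |Y i ω| ≤ 1 := (MeasureTheory.ae_all_iff).mpr hbound
  have hmeasprod : ∀ (s : Finset (Fin (2*m))) (k : Fin (2*m) → I),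
      Measurable (fun ω => ∏ p ∈ s, Y (k p) ω) :=
    fun s k => Finset.measurable_prod s (fun p _ => hmeas (k p))
  have haeprod : ∀ (s : Finset (Fin (2*m))) (k : Fin (2*m) → I),
      ∀ᵐ ω ∂μ, |∏ p ∈ s, Y (k p) ω| ≤ 1 := by
    intro s k
    filter_upwards [haeb] with ω hω
    rw [Finset.abs_prod]
    exact Finset.prod_le_one (fun p _ => abs_nonneg _) (fun p _ => hω (k p))
  have hint : ∀ (s : Finset (Fin (2*m))) (k : Fin (2*m) → I),
      Integrable (fun ω => ∏ p ∈ s, Y (k p) ω) μ := by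
    intro s k
    apply MeasureTheory.Integrable.mono' (integrable_const (1:ℝ))
      ((hmeasprod s k).aestronglyMeasurable)
    filter_upwards [haeprod s k] with ω hω
    rwa [Real.norm_eq_abs]
  have hexp : ∫ ω, (∑ i, Y i ω) ^ (2*m) ∂μ
      = ∑ k : Fin (2*m) → I, ∫ ω, ∏ p, Y (k p) ω ∂μ := by
    rw [show (fun ω => (∑ i, Y i ω) ^ (2*m))
        = (fun ω => ∑ k : Fin (2*m) → I, ∏ p, Y (k p) ω) from
      funext (fun ω => Fintype.sum_pow (fun i => Y i ω) (2*m))]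
    exact integral_finset_sum Finset.univ (fun k _ => hint Finset.univ k)
  set Good : Finset ((Fin (2*m)) → I) :=
    Finset.univ.filter (fun k => ∀ p, ∃ q, q ≠ p ∧ R (k p) (k q)) with hGood
  have hbadzero : ∀ k : Fin (2*m) → I, k ∉ Good → ∫ ω, ∏ p, Y (k p) ω ∂μ = 0 := by
    intro k hk
    rw [hGood, Finset.mem_filter] at hk
    push_neg at hk
    obtain ⟨p0, hp0⟩ := hk (Finset.mem_univ k)
    have hnR : ∀ p ∈ Finset.univ.erase p0, ¬ R (k p0) (k p) := fun p hp =>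
      hp0 p (Finset.mem_erase.mp hp).1
    set i := k p0 with hi
    set Z : Ω → ({j : I // ¬ R i j} → ℝ) := fun ω => fun j => Y j.1 ω with hZ
    set f : ({j : I // ¬ R i j} → ℝ) → ℝ :=
      fun v => ∏ p ∈ (Finset.univ.erase p0).attach, v ⟨k p.1, hnR p.1 p.2⟩ with hf
    have hfmeas : Measurable f :=
      Finset.measurable_prod _ (fun p _ => measurable_pi_apply _)
    have hcomp : IndepFun (Y i) (f ∘ Z) μ := by
      have := (hindep i).comp measurable_id hfmeas
      exact this
    have hfZ : (f ∘ Z) = fun ω => ∏ p ∈ Finset.univ.erase p0, Y (k p) ω := by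
      funext ω
      exact Finset.prod_attach _ (fun p => Y (k p) ω)
    rw [hfZ] at hcomp
    have h2 : integral μ (Y i * (fun ω => ∏ p ∈ Finset.univ.erase p0, Y (k p) ω))
        = (∫ ω, Y i ω ∂μ) * ∫ ω, ∏ p ∈ Finset.univ.erase p0, Y (k p) ω ∂μ :=
      IndepFun.integral_mul_eq_mul_integral hcomp (hmeas i).aestronglyMeasurable
        (hmeasprod _ k).aestronglyMeasurable
    have h3 : (fun ω => ∏ p, Y (k p) ω)
        = Y i * (fun ω => ∏ p ∈ Finset.univ.erase p0, Y (k p) ω) := by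
      funext ω
      show ∏ p, Y (k p) ω = Y (k p0) ω * ∏ p ∈ Finset.univ.erase p0, Y (k p) ω
      exact (Finset.mul_prod_erase Finset.univ (fun p => Y (k p) ω)
        (Finset.mem_univ p0)).symm
    show integral μ (fun ω => ∏ p, Y (k p) ω) = 0
    rw [h3, h2, hcent i, zero_mul]
  have hgoodle : ∀ k ∈ Good, ∫ ω, ∏ p, Y (k p) ω ∂μ ≤ 1 := by
    intro k _
    have h1 : ∀ᵐ ω ∂μ, ∏ p, Y (k p) ω ≤ (1:ℝ) := by
      filter_upwards [haeprod Finset.univ k] with ω hω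
      exact (le_abs_self _).trans hω
    calc ∫ ω, ∏ p, Y (k p) ω ∂μ ≤ ∫ _ω, (1:ℝ) ∂μ :=
          integral_mono_ae (hint Finset.univ k) (integrable_const 1) h1
      _ = 1 := by simp
  have hcardGood : Good.card ≤ (2*m)^(2*m) * 3^(2*m) * (Fintype.card I * L) ^ m := by
    rw [hGood]
    convert good_count (β := Fin (2*m)) R L m (Fintype.card_fin _) hL hLN hsymm using 2
    ext k
    simp [Finset.mem_filter]
  rw [hexp]
  calc ∑ k : Fin (2*m) → I, ∫ ω, ∏ p, Y (k p) ω ∂μ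
      = ∑ k ∈ Good, ∫ ω, ∏ p, Y (k p) ω ∂μ :=
        (Finset.sum_subset (Finset.filter_subset _ _)
          (fun k _ hk => hbadzero k hk)).symm
    _ ≤ ∑ _k ∈ Good, (1:ℝ) := Finset.sum_le_sum hgoodle
    _ = (Good.card : ℝ) := by simp
    _ ≤ (((2*m)^(2*m) * 3^(2*m) * (Fintype.card I * L) ^ m : ℕ) : ℝ) :=
        Nat.cast_le.mpr hcardGood
    _ = (((2*m)^(2*m) * 3^(2*m) : ℕ) : ℝ) * ((Fintype.card I : ℝ) * L) ^ m := by
        push_cast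
        ring
end

section
/- For every positive integer m there is a finite constant C_m, depending only on m, with the following property. Let I be a finite nonempty set, let R ⊆ I × I be a symmetric relation with (i,i) ∈ R for all i ∈ I, and let L = max_{i∈I} |{j ∈ I : (i,j) ∈ R}|. Then the number of tuples (i_1, ..., i_{2m}) ∈ I^{2m} such that for every a ∈ {1, ..., 2m} there exists b ≠ a with (i_a, i_b) ∈ R is at most C_m · |I|^m · L^m. -/
open Function Finset

variable {n : ℕ}

open Classical in
/-- roots: periodic points minimal in their orbit -/
noncomputable def rootSet (n : ℕ) (g : Fin n → Fin n) : Finset (Fin n) :=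
  univ.filter (fun a => (∃ k ∈ Finset.Icc 1 n, g^[k] a = a) ∧
    ∀ k ∈ Finset.range (n + 1), a ≤ g^[k] a)

lemma iterate_mul_fixed (g : Fin n → Fin n) {p : ℕ} {b : Fin n} (hb : g^[p] b = b)
    (q : ℕ) : g^[p * q] b = b := by
  rw [Function.iterate_mul]
  exact Function.iterate_fixed hb q

lemma iterate_mod (g : Fin n → Fin n) {p : ℕ} {b : Fin n} (hb : g^[p] b = b) (hp : 0 < p)
    (k : ℕ) : g^[k] b = g^[k % p] b := by
  conv_lhs => rw [← Nat.mod_add_div k p]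
  rw [Function.iterate_add_apply, iterate_mul_fixed g hb (k / p)]

lemma exists_iterate_mem_rootSet (g : Fin n → Fin n) (a : Fin n) :
    ∃ k, g^[k] a ∈ rootSet n g := by
  obtain ⟨k1, k2, hne, heq⟩ := Fintype.exists_ne_map_eq_of_card_lt
    (fun k : Fin (n + 1) => g^[(k : ℕ)] a) (by simp)
  have hij : ∃ i j : ℕ, i < j ∧ j ≤ n ∧ g^[i] a = g^[j] a := by
    rcases Ne.lt_or_gt hne with h | h
    · exact ⟨k1, k2, h, Nat.lt_succ_iff.1 k2.isLt, heq⟩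
    · exact ⟨k2, k1, h, Nat.lt_succ_iff.1 k1.isLt, heq.symm⟩
  obtain ⟨i, j, hij, hjn, he⟩ := hij
  set b := g^[i] a with hb
  set p := j - i with hpdef
  have hp : 0 < p := by omega
  have hpn : p ≤ n := by omega
  have hpb : g^[p] b = b := by
    rw [hb, ← Function.iterate_add_apply, show p + i = j by omega]
    exact he.symm
  have hO : ((Finset.range p).image (fun k => g^[k] b)).Nonempty :=
    (Finset.nonempty_range_iff.2 (by omega)).image _
  set O := (Finset.range p).image (fun k => g^[k] b) with hOdef
  obtain ⟨t, ht, hc⟩ := Finset.mem_image.1 (O.min'_mem hO)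
  refine ⟨t + i, ?_⟩
  have hca : g^[t + i] a = O.min' hO := by
    rw [Function.iterate_add_apply]; exact hc
  rw [hca]
  simp only [rootSet, mem_filter, mem_univ, true_and]
  constructor
  · refine ⟨p, Finset.mem_Icc.2 ⟨hp, hpn⟩, ?_⟩
    rw [← hc, ← Function.iterate_add_apply, add_comm, Function.iterate_add_apply, hpb]
  · intro k _
    have hk : g^[k] (O.min' hO) = g^[(k + t) % p] b := by
      rw [← hc, ← Function.iterate_add_apply, iterate_mod g hpb hp]
    rw [hk]
    exact O.min'_le _ (Finset.mem_image.2 ⟨(k + t) % p,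
      Finset.mem_range.2 (Nat.mod_lt _ hp), rfl⟩)

lemma rootSet_le_iterate (g : Fin n → Fin n) {s : Fin n} (hs : s ∈ rootSet n g) (j : ℕ) :
    s ≤ g^[j] s := by
  simp only [rootSet, mem_filter, mem_univ, true_and] at hs
  obtain ⟨⟨p, hp, hps⟩, hmin⟩ := hs
  rw [Finset.mem_Icc] at hp
  rw [iterate_mod g hps (by omega) j]
  exact hmin _ (Finset.mem_range.2 (by
    have := Nat.mod_lt j (show 0 < p by omega); omega))

lemma rootSet_le_of_iterate_eq (g : Fin n → Fin n) {x y : Fin n}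
    (hx : x ∈ rootSet n g) (hy : y ∈ rootSet n g) {k l : ℕ}
    (h : g^[k] x = g^[l] y) : x ≤ y := by
  have hy' := hy
  simp only [rootSet, mem_filter, mem_univ, true_and] at hy'
  obtain ⟨⟨p, hp, hps⟩, -⟩ := hy'
  rw [Finset.mem_Icc] at hp
  have h1 : g^[p * l] y = y := iterate_mul_fixed g hps l
  have h2 : y = g^[(p * l - l) + k] x := by
    rw [Function.iterate_add_apply, h, ← Function.iterate_add_apply,
      Nat.sub_add_cancel (Nat.le_mul_of_pos_left l (by omega)), h1]
  rw [h2]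
  exact rootSet_le_iterate g hx _

lemma rootSet_eq_of_iterate_eq (g : Fin n → Fin n) {x y : Fin n}
    (hx : x ∈ rootSet n g) (hy : y ∈ rootSet n g) {k l : ℕ}
    (h : g^[k] x = g^[l] y) : x = y :=
  le_antisymm (rootSet_le_of_iterate_eq g hx hy h)
    (rootSet_le_of_iterate_eq g hy hx h.symm)

lemma two_mul_card_rootSet_le (g : Fin n → Fin n) (hg : ∀ a, g a ≠ a) :
    2 * (rootSet n g).card ≤ n := by
  have hdisj : ∀ s ∈ rootSet n g, ∀ s' ∈ rootSet n g, s ≠ s' →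
      Disjoint ({s, g s} : Finset (Fin n)) {s', g s'} := by
    intro s hs s' hs' hne
    rw [Finset.disjoint_left]
    intro x hx hx'
    apply hne
    simp only [Finset.mem_insert, Finset.mem_singleton] at hx hx'
    have h1 : ∃ k, g^[k] s = x := by
      rcases hx with h | h
      · exact ⟨0, h.symm⟩
      · exact ⟨1, by simpa using h.symm⟩
    have h2 : ∃ l, g^[l] s' = x := by
      rcases hx' with h | h
      · exact ⟨0, h.symm⟩
      · exact ⟨1, by simpa using h.symm⟩
    obtain ⟨k, hk⟩ := h1
    obtain ⟨l, hl⟩ := h2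
    exact rootSet_eq_of_iterate_eq g hs hs' (hk.trans hl.symm)
  calc 2 * (rootSet n g).card
      = ∑ s ∈ rootSet n g, ({s, g s} : Finset (Fin n)).card := by
        rw [Finset.sum_congr rfl (fun s _ => by
          rw [Finset.card_insert_of_notMem (by simp [Ne.symm (hg s)]),
            Finset.card_singleton])]
        rw [Finset.sum_const, smul_eq_mul, mul_comm]
    _ = ((rootSet n g).biUnion (fun s => {s, g s})).card :=
        (Finset.card_biUnion hdisj).symm
    _ ≤ (Finset.univ : Finset (Fin n)).card := Finset.card_le_univ _
    _ = n := by simp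

lemma card_compatible {I : Type} [Fintype I] (R : I → I → Prop)
    [DecidableRel R] (hsym : ∀ i j, R i j → R j i) (L : ℕ) (hL0 : 0 < L)
    (hL : ∀ i, (univ.filter (fun j => R i j)).card ≤ L)
    {n : ℕ} (g : Fin n → Fin n) :
    (univ.filter (fun f : Fin n → I => ∀ a, R (f a) (f (g a)))).card ≤
      Fintype.card I ^ (rootSet n g).card * L ^ (n - (rootSet n g).card) := by
  classical
  set S := rootSet n g with hSdef
  set t : I → Finset I := fun i => univ.filter (fun j => R i j) with htdef
  let idx : I → I → Fin L := fun i x =>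
    if h : x ∈ t i then Fin.castLE (hL i) ((t i).equivFin ⟨x, h⟩) else ⟨0, hL0⟩
  have idx_inj : ∀ i x y, x ∈ t i → y ∈ t i → idx i x = idx i y → x = y := by
    intro i x y hx hy h
    simp only [idx, dif_pos hx, dif_pos hy] at h
    have h1 : ((t i).equivFin ⟨x, hx⟩ : Fin _) = (t i).equivFin ⟨y, hy⟩ := by
      apply Fin.ext
      have := congrArg Fin.val h
      simpa using this
    have h2 := (t i).equivFin.injective h1
    exact Subtype.ext_iff.1 h2
  let Φ : (Fin n → I) → ({a : Fin n // a ∈ S} → I) × ({a : Fin n // a ∉ S} → Fin L) :=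
    fun f => (fun a => f a.1, fun a => idx (f (g a.1)) (f a.1))
  have hinj : Set.InjOn Φ (univ.filter (fun f : Fin n → I => ∀ a, R (f a) (f (g a)))) := by
    intro f hf f' hf' hΦ
    simp only [Finset.coe_filter, Set.mem_setOf_eq, mem_univ, true_and] at hf hf'
    have hre := fun a => exists_iterate_mem_rootSet g a
    funext a
    have key : ∀ k a, Nat.find (hre a) ≤ k → f a = f' a := by
      intro k
      induction k with
      | zero =>
        intro a ha
        have hmem : a ∈ S := by
          have hsp := Nat.find_spec (hre a)
          rw [Nat.le_zero.1 ha] at hsp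
          simpa using hsp
        exact congrFun (congrArg Prod.fst hΦ) ⟨a, hmem⟩
      | succ k ih =>
        intro a ha
        by_cases hmem : a ∈ S
        · exact congrFun (congrArg Prod.fst hΦ) ⟨a, hmem⟩
        · have h1 : Nat.find (hre a) ≠ 0 := by
            intro h0
            have hsp := Nat.find_spec (hre a)
            rw [h0] at hsp
            simp only [Function.iterate_zero, id_eq] at hsp
            exact hmem hsp
          have h2 : g^[Nat.find (hre a) - 1] (g a) ∈ S := by
            have hsp := Nat.find_spec (hre a)
            rwa [show Nat.find (hre a) = (Nat.find (hre a) - 1) + 1 by omega,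
              Function.iterate_succ_apply] at hsp
          have hNg : Nat.find (hre (g a)) ≤ Nat.find (hre a) - 1 :=
            Nat.find_min' (hre (g a)) h2
          have hga : f (g a) = f' (g a) := ih (g a) (by omega)
          have hmem1 : f a ∈ t (f' (g a)) := by
            rw [← hga]
            simp only [htdef, mem_filter, mem_univ, true_and]
            exact hsym _ _ (hf a)
          have hmem2 : f' a ∈ t (f' (g a)) := by
            simp only [htdef, mem_filter, mem_univ, true_and]
            exact hsym _ _ (hf' a)
          have h3 := congrFun (congrArg Prod.snd hΦ) ⟨a, hmem⟩
          simp only [Φ] at h3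
          rw [hga] at h3
          exact idx_inj _ _ _ hmem1 hmem2 h3
    exact key (Nat.find (hre a)) a le_rfl
  calc (univ.filter (fun f : Fin n → I => ∀ a, R (f a) (f (g a)))).card
      ≤ (univ : Finset (({a : Fin n // a ∈ S} → I) × ({a : Fin n // a ∉ S} → Fin L))).card :=
        Finset.card_le_card_of_injOn Φ (fun _ _ => mem_univ _) hinj
    _ = Fintype.card I ^ S.card * L ^ (n - S.card) := by
        rw [Finset.card_univ, Fintype.card_prod, Fintype.card_fun, Fintype.card_fun]
        congr 2
        · exact Fintype.card_coe S
        · exact Fintype.card_fin L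
        · rw [Fintype.card_subtype_compl]
          simp [Fintype.card_coe]

/-- For every `m ≥ 1` there is a constant `C_m` such that for every finite
nonempty set `I` with a symmetric reflexive relation `R` in which every element is related to
at most `L` elements, the number of tuples `(i₁, …, i_{2m}) ∈ I^{2m}` in which every entry is
`R`-related to some other entry is at most `C_m |I|^m L^m`. -/
theorem count_tuples_dependency_graph
    (m : ℕ) (hm : 0 < m) :
    ∃ C : ℕ, ∀ (I : Type) (_ : Fintype I) (_ : Nonempty I)
      (R : I → I → Prop) (_ : DecidableRel R) (L : ℕ),
      (∀ i, R i i) →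
      (∀ i j, R i j → R j i) →
      L = Finset.univ.sup (fun i => (Finset.univ.filter (fun j => R i j)).card) →
      Set.ncard {f : Fin (2 * m) → I | ∀ a, ∃ b, b ≠ a ∧ R (f a) (f b)} ≤
        C * Fintype.card I ^ m * L ^ m := by
  refine ⟨(2 * m) ^ (2 * m), ?_⟩
  intro I _ hne R _ L hrefl hsym hLdef
  classical
  have hL : ∀ i, (univ.filter (fun j => R i j)).card ≤ L := fun i =>
    hLdef ▸ Finset.le_sup (f := fun i => (univ.filter (fun j => R i j)).card) (mem_univ i)
  have hL0 : 0 < L := by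
    obtain ⟨i0⟩ := hne
    have h1 : 0 < (univ.filter (fun j => R i0 j)).card :=
      Finset.card_pos.2 ⟨i0, by simp [hrefl i0]⟩
    exact h1.trans_le (hL i0)
  have hLI : L ≤ Fintype.card I := by
    rw [hLdef]
    exact Finset.sup_le fun i _ => (Finset.card_filter_le _ _).trans (by simp)
  have hset : {f : Fin (2 * m) → I | ∀ a, ∃ b, b ≠ a ∧ R (f a) (f b)} =
      ↑(univ.filter (fun f : Fin (2 * m) → I => ∀ a, ∃ b, b ≠ a ∧ R (f a) (f b))) := by
    ext f; simp
  rw [hset, Set.ncard_coe_finset]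
  set A := univ.filter (fun f : Fin (2 * m) → I => ∀ a, ∃ b, b ≠ a ∧ R (f a) (f b)) with hA
  set D : Finset (Fin (2 * m) → Fin (2 * m)) := univ.filter (fun g => ∀ a, g a ≠ a) with hD
  have hsub : A ⊆ D.biUnion (fun g =>
      univ.filter (fun f : Fin (2 * m) → I => ∀ a, R (f a) (f (g a)))) := by
    intro f hf
    simp only [hA, mem_filter, mem_univ, true_and] at hf
    choose b hb1 hb2 using hf
    exact mem_biUnion.2 ⟨b, by simp [hD, hb1], by simp [hb2]⟩
  calc A.card ≤ (D.biUnion (fun g =>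
          univ.filter (fun f : Fin (2 * m) → I => ∀ a, R (f a) (f (g a))))).card :=
        Finset.card_le_card hsub
    _ ≤ ∑ g ∈ D, (univ.filter (fun f : Fin (2 * m) → I => ∀ a, R (f a) (f (g a)))).card :=
        Finset.card_biUnion_le
    _ ≤ ∑ _g ∈ D, Fintype.card I ^ m * L ^ m := by
        refine Finset.sum_le_sum fun g hg => ?_
        have hgne : ∀ a, g a ≠ a := by
          simpa [hD] using hg
        have hs : (rootSet (2 * m) g).card ≤ m := by
          have := two_mul_card_rootSet_le g hgne
          omega
        set s := (rootSet (2 * m) g).card with hsd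
        calc (univ.filter (fun f : Fin (2 * m) → I => ∀ a, R (f a) (f (g a)))).card
            ≤ Fintype.card I ^ s * L ^ (2 * m - s) :=
              card_compatible R hsym L hL0 hL g
          _ = Fintype.card I ^ s * (L ^ (m - s) * L ^ m) := by
              rw [← pow_add, show m - s + m = 2 * m - s by omega]
          _ ≤ Fintype.card I ^ s * (Fintype.card I ^ (m - s) * L ^ m) := by
              gcongr
          _ = Fintype.card I ^ m * L ^ m := by
              rw [← mul_assoc, ← pow_add, show s + (m - s) = m by omega]
    _ = D.card * (Fintype.card I ^ m * L ^ m) := by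
        rw [Finset.sum_const, smul_eq_mul]
    _ ≤ (2 * m) ^ (2 * m) * (Fintype.card I ^ m * L ^ m) := by
        have hDc : D.card ≤ (2 * m) ^ (2 * m) := by
          refine (Finset.card_le_univ D).trans ?_
          simp [Fintype.card_fun]
        exact Nat.mul_le_mul_right _ hDc
    _ = (2 * m) ^ (2 * m) * Fintype.card I ^ m * L ^ m := by ring
end
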